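/- If points x_1,...,x_n ∈ R^p are pairwise distinct and θ_1,...,θ_p > 0, then the Gaussian kernel matrix with entries exp(-Σ_{k=1}^p θ_k (x_{ik}-x_{jk})^2) is positive definite. -/

import Mathlib

open Finset

-- key strictness lemma
lemma aux_dzero {n p : ℕ} (x : Fin n → Fin p → ℝ)
    (hx : ∀ i j : Fin n, i ≠ j → x i ≠ x j) (d : Fin n → ℝ)
    (H : ∀ (m : ℕ) (α : Fin m → Fin p), ∑ i, d i * ∏ t, x i (α t) = 0) :
    d = 0 := by
  classical
  -- multiset version
  have HM : ∀ M : Multiset (Fin p), ∑ i, d i * (M.map (x i)).prod = 0 := by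
    intro M
    have h := H M.toList.length (fun t => M.toList.get t)
    have heq : ∀ i, (M.map (x i)).prod = ∏ t, x i (M.toList.get t) := by
      intro i
      conv_lhs => rw [← M.coe_toList]
      rw [Multiset.map_coe, Multiset.prod_coe]
      rw [show M.toList.map (x i) = List.ofFn ((x i) ∘ M.toList.get) from by
        conv_lhs => rw [← List.ofFn_get M.toList]
        rw [List.map_ofFn], List.prod_ofFn]
      simp [Function.comp]
    simpa only [heq] using h
  funext i0
  rcases isEmpty_or_nonempty (Fin p) with hp | hp
  · -- p = 0 : all points equal, so n = 1
    have hall : ∀ i : Fin n, i = i0 := by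
      intro i
      by_contra h
      exact hx i i0 h (funext fun k => isEmptyElim k)
    have h0 := H 0 (fun t => t.elim0)
    simp only [Finset.univ_eq_empty, Finset.prod_empty, mul_one] at h0
    have : ∑ i, d i = d i0 :=
      Finset.sum_eq_single i0 (fun b _ hb => absurd (hall b) hb)
        (fun h => absurd (Finset.mem_univ i0) h)
    simp only [Pi.zero_apply]
    rw [← this]
    simpa using h0
  · -- choose coordinates separating i0 from each other j
    have hk : ∀ j : Fin n, j ≠ i0 → ∃ k, x i0 k ≠ x j k := by
      intro j hj
      by_contra hcon
      push_neg at hcon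
      exact hx i0 j (Ne.symm hj) (funext hcon)
    choose k hkne using hk
    set S : Finset (Fin n) := Finset.univ.erase i0 with hS
    have hmemS : ∀ j ∈ S, j ≠ i0 := fun j hj => (Finset.mem_erase.mp hj).1
    set K : Fin n → Fin p := fun j =>
      if h : j ≠ i0 then k j h else Classical.arbitrary (Fin p) with hK
    have hsum0 : ∑ i, d i * ∏ j ∈ S, (x i (K j) - x j (K j)) = 0 := by
      have expand : ∀ i : Fin n, ∏ j ∈ S, (x i (K j) - x j (K j))
          = ∑ T ∈ S.powerset, (∏ j ∈ T, x i (K j)) * ∏ j ∈ S \ T, (-(x j (K j))) := by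
        intro i
        rw [← Finset.prod_add]
        apply Finset.prod_congr rfl
        intros; ring
      simp only [expand, Finset.mul_sum]
      rw [Finset.sum_comm]
      apply Finset.sum_eq_zero
      intro T _
      have hTprod : ∀ i : Fin n, (∏ j ∈ T, x i (K j)) = ((T.val.map K).map (x i)).prod := by
        intro i
        rw [Multiset.map_map]
        rfl
      calc ∑ i, d i * ((∏ j ∈ T, x i (K j)) * ∏ j ∈ S \ T, (-(x j (K j))))
          = (∑ i, d i * ((T.val.map K).map (x i)).prod) * ∏ j ∈ S \ T, (-(x j (K j))) := by
            rw [Finset.sum_mul]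
            apply Finset.sum_congr rfl
            intro i _
            rw [hTprod i]; ring
        _ = 0 := by rw [HM]; ring
    have hsingle : ∑ i, d i * ∏ j ∈ S, (x i (K j) - x j (K j))
        = d i0 * ∏ j ∈ S, (x i0 (K j) - x j (K j)) := by
      apply Finset.sum_eq_single i0
      · intro i _ hi
        have hiS : i ∈ S := Finset.mem_erase.mpr ⟨hi, Finset.mem_univ i⟩
        rw [Finset.prod_eq_zero hiS (by ring), mul_zero]
      · intro h; exact absurd (Finset.mem_univ i0) h
    have hprodne : ∏ j ∈ S, (x i0 (K j) - x j (K j)) ≠ 0 := by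
      rw [Finset.prod_ne_zero_iff]
      intro j hj
      have hji0 := hmemS j hj
      have : K j = k j hji0 := by simp [hK, hji0]
      rw [this]
      exact sub_ne_zero_of_ne (hkne j hji0)
    have h := hsingle ▸ hsum0
    simp only [Pi.zero_apply]
    rcases mul_eq_zero.mp h with h | h
    · exact h
    · exact absurd h hprodne

-- expansion of the m-th power term
lemma aux_expand {n p : ℕ} (x : Fin n → Fin p → ℝ) (θ : Fin p → ℝ) (d : Fin n → ℝ) (m : ℕ) :
    (∑ i, ∑ j, d i * d j * (∑ k, θ k * x i k * x j k) ^ m)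
      = ∑ α : Fin m → Fin p, (∏ t, θ (α t)) * (∑ i, d i * ∏ t, x i (α t)) ^ 2 := by
  have hB : ∀ i j : Fin n, (∑ k, θ k * x i k * x j k) ^ m
      = ∑ α : Fin m → Fin p, ∏ t, (θ (α t) * x i (α t) * x j (α t)) :=
    fun i j => Fintype.sum_pow _ m
  simp only [hB, Finset.mul_sum]
  rw [Finset.sum_congr rfl fun i _ => Finset.sum_comm, Finset.sum_comm]
  refine Finset.sum_congr rfl fun α _ => ?_
  rw [sq, Finset.sum_mul_sum, Finset.mul_sum]
  refine Finset.sum_congr rfl fun i _ => ?_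
  rw [Finset.mul_sum]
  refine Finset.sum_congr rfl fun j _ => ?_
  rw [Finset.prod_mul_distrib, Finset.prod_mul_distrib]
  ring

theorem gaussian_kernel_posDef_of_distinct {n p : ℕ} (x : Fin n → Fin p → ℝ)
    (hx : ∀ i j : Fin n, i ≠ j → x i ≠ x j)
    (θ : Fin p → ℝ) (hθ : ∀ k, 0 < θ k) :
    (Matrix.of fun i j : Fin n =>
      Real.exp (-∑ k, θ k * (x i k - x j k) ^ 2)).PosDef := by
  classical
  set B : Fin n → Fin n → ℝ := fun i j => ∑ k, θ k * x i k * x j k with hBdef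
  have key : ∀ i j : Fin n, Real.exp (-∑ k, θ k * (x i k - x j k) ^ 2)
      = Real.exp (-∑ k, θ k * x i k ^ 2) * Real.exp (-∑ k, θ k * x j k ^ 2)
        * Real.exp (2 * B i j) := by
    intro i j
    rw [← Real.exp_add, ← Real.exp_add]
    congr 1
    have h1 : ∀ k : Fin p, θ k * (x i k - x j k) ^ 2
        = θ k * x i k ^ 2 + θ k * x j k ^ 2 - 2 * (θ k * x i k * x j k) :=
      fun k => by ring
    simp only [h1, Finset.sum_sub_distrib, Finset.sum_add_distrib, hBdef, Finset.mul_sum]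
    ring
  rw [Matrix.posDef_iff_dotProduct_mulVec]
  constructor
  · -- symmetric
    ext i j
    simp only [Matrix.conjTranspose_apply, Matrix.of_apply, star_trivial]
    congr 2
    apply Finset.sum_congr rfl
    intros; ring
  · intro c hc
    set d : Fin n → ℝ := fun i => c i * Real.exp (-∑ k, θ k * x i k ^ 2) with hd
    have hexp : ∀ t : ℝ, Real.exp t = ∑' m : ℕ, t ^ m / (Nat.factorial m : ℝ) := by
      intro t
      rw [Real.exp_eq_exp_ℝ, NormedSpace.exp_eq_tsum_div]
    set F : ℕ → ℝ :=
      fun m => ∑ i, ∑ j, d i * d j * ((2 * B i j) ^ m / (Nat.factorial m : ℝ)) with hF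
    have hsummand : ∀ i j : Fin n,
        Summable fun m : ℕ => d i * d j * ((2 * B i j) ^ m / (Nat.factorial m : ℝ)) :=
      fun i j => (NormedSpace.expSeries_div_summable (2 * B i j)).mul_left _
    have hFsummable : Summable F := by
      apply summable_sum
      intro i _
      exact summable_sum fun j _ => hsummand i j
    have hQ : dotProduct (star c) (Matrix.mulVec (Matrix.of fun i j : Fin n =>
        Real.exp (-∑ k, θ k * (x i k - x j k) ^ 2)) c) = ∑' m, F m := by
      calc dotProduct (star c) (Matrix.mulVec (Matrix.of fun i j : Fin n =>
            Real.exp (-∑ k, θ k * (x i k - x j k) ^ 2)) c)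
          = ∑ i, ∑ j, d i * d j * Real.exp (2 * B i j) := by
            simp only [dotProduct, Matrix.mulVec, Matrix.of_apply, star_trivial,
              Finset.mul_sum]
            refine Finset.sum_congr rfl fun i _ => Finset.sum_congr rfl fun j _ => ?_
            rw [key i j, hd]; ring
        _ = ∑ i, ∑ j, ∑' m : ℕ, d i * d j * ((2 * B i j) ^ m / (Nat.factorial m : ℝ)) := by
            refine Finset.sum_congr rfl fun i _ => Finset.sum_congr rfl fun j _ => ?_
            rw [tsum_mul_left, hexp (2 * B i j)]
        _ = ∑' m, F m := by
            rw [hF, Summable.tsum_finsetSum (fun i (_ : i ∈ Finset.univ) => summable_sum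
              fun j (_ : j ∈ Finset.univ) => hsummand i j)]
            exact Finset.sum_congr rfl fun i _ =>
              (Summable.tsum_finsetSum fun j (_ : j ∈ Finset.univ) => hsummand i j).symm
    have hFeq : ∀ m : ℕ, F m = ((2:ℝ) ^ m / (Nat.factorial m : ℝ)) *
        ∑ α : Fin m → Fin p, (∏ t, θ (α t)) * (∑ i, d i * ∏ t, x i (α t)) ^ 2 := by
      intro m
      rw [hF, ← aux_expand x θ d m]
      simp only [Finset.mul_sum]
      refine Finset.sum_congr rfl fun i _ => Finset.sum_congr rfl fun j _ => ?_
      rw [mul_pow]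
      ring
    have hd0 : d ≠ 0 := by
      intro h
      apply hc
      funext i
      have hdi := congrFun h i
      simp only [hd, Pi.zero_apply] at hdi ⊢
      rcases mul_eq_zero.mp hdi with h' | h'
      · exact h'
      · exact absurd h' (Real.exp_ne_zero _)
    have hFnn : ∀ m, 0 ≤ F m := by
      intro m
      rw [hFeq]
      apply mul_nonneg (by positivity)
      exact Finset.sum_nonneg fun α _ =>
        mul_nonneg (Finset.prod_nonneg fun t _ => (hθ _).le) (sq_nonneg _)
    obtain ⟨m0, hm0⟩ : ∃ m, F m ≠ 0 := by
      by_contra hcon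
      push_neg at hcon
      apply hd0
      apply aux_dzero x hx
      intro m α
      have hm := hcon m
      rw [hFeq] at hm
      have h2 : ((2:ℝ) ^ m / (Nat.factorial m : ℝ)) ≠ 0 := by positivity
      have hsum := (mul_eq_zero.mp hm).resolve_left h2
      have hterm := (Finset.sum_eq_zero_iff_of_nonneg (fun α _ =>
        mul_nonneg (Finset.prod_nonneg fun t _ => (hθ _).le) (sq_nonneg _))).mp
        hsum α (Finset.mem_univ α)
      have hw : (0:ℝ) < ∏ t, θ (α t) := Finset.prod_pos fun t _ => hθ _
      have hsq := (mul_eq_zero.mp hterm).resolve_left hw.ne'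
      exact pow_eq_zero_iff two_ne_zero |>.mp hsq
    rw [hQ]
    exact Summable.tsum_pos hFsummable hFnn m0 (lt_of_le_of_ne (hFnn m0) (Ne.symm hm0))
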